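/- Let I : (0,1) → (0,1) be quasiconcave. For measurable f on (0,1) and t ∈ (0,1) define K(f,t) = inf{ ‖g‖_1 + t·‖h‖_{m_Ĩ} : f = g + h, g and h measurable on (0,1) }, where ‖g‖_1 = ∫_0^1 |g| and ‖h‖_{m_Ĩ} = sup_{0<s<1} (s/I(s)) h^*(s). Then there exists C > 0 such that for every f ∈ M_+(0,1) and every t ∈ (0,1): K(f,t) ≤ C·( ∫_0^{I^{-1}(t)} f^*(s) ds + t·sup_{I^{-1}(t)≤s<1} (s/I(s)) f^*(s) ). -/

import Mathlib

open MeasureTheory Set Filter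
open scoped ENNReal

noncomputable section

/-- The nonincreasing rearrangement of `f` over `(0,1)`. -/
def rearr (f : ℝ → ℝ≥0∞) (t : ℝ) : ℝ≥0∞ :=
  sInf {l : ℝ≥0∞ | volume {s ∈ Set.Ioo (0:ℝ) 1 | l < f s} ≤ ENNReal.ofReal t}

/-- The maximal nonincreasing rearrangement `f^{**}(t) = (1/t) ∫_0^t f^*(s) ds`. -/
def dstar (f : ℝ → ℝ≥0∞) (t : ℝ) : ℝ≥0∞ :=
  (ENNReal.ofReal t)⁻¹ * ∫⁻ s in Set.Ioo (0:ℝ) t, rearr f s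

/-- The `L¹(0,1)` norm. -/
def lOne (f : ℝ → ℝ≥0∞) : ℝ≥0∞ := ∫⁻ t in Set.Ioo (0:ℝ) 1, f t

/-- The norm of the Marcinkiewicz-type space `m_I`. -/
def mNorm (I : ℝ → ℝ) (f : ℝ → ℝ≥0∞) : ℝ≥0∞ :=
  ⨆ t ∈ Set.Ioo (0:ℝ) 1, ENNReal.ofReal (I t) * rearr f t

/-- The norm of `m_Ĩ` where `Ĩ(t) = t / I(t)`. -/
def mNormTilde (I : ℝ → ℝ) (f : ℝ → ℝ≥0∞) : ℝ≥0∞ :=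
  ⨆ t ∈ Set.Ioo (0:ℝ) 1, ENNReal.ofReal (t / I t) * rearr f t

/-- The supremum operator `S_I f(t) = (1/I(t)) sup_{0<s≤t} I(s) f^*(s)`. -/
def SI (I : ℝ → ℝ) (f : ℝ → ℝ≥0∞) : ℝ → ℝ≥0∞ := fun t =>
  (ENNReal.ofReal (I t))⁻¹ * ⨆ s ∈ Set.Ioc (0:ℝ) t, ENNReal.ofReal (I s) * rearr f s

/-- The supremum operator `T_I f(t) = (I(t)/t) sup_{t≤s<1} (s/I(s)) f^*(s)`. -/
def TI (I : ℝ → ℝ) (f : ℝ → ℝ≥0∞) : ℝ → ℝ≥0∞ := fun t =>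
  ENNReal.ofReal (I t / t) * ⨆ s ∈ Set.Ico t 1, ENNReal.ofReal (s / I s) * rearr f s

/-- `H_I f(t) = ∫_t^1 f(s)/I(s) ds`. -/
def HI (I : ℝ → ℝ) (f : ℝ → ℝ≥0∞) : ℝ → ℝ≥0∞ := fun t =>
  ∫⁻ s in Set.Ioo t 1, f s / ENNReal.ofReal (I s)

/-- `R_I f(t) = (1/I(t)) ∫_0^t f(s) ds`. -/
def RI (I : ℝ → ℝ) (f : ℝ → ℝ≥0∞) : ℝ → ℝ≥0∞ := fun t =>
  (ENNReal.ofReal (I t))⁻¹ * ∫⁻ s in Set.Ioo (0:ℝ) t, f s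

/-- `I : (0,1) → (0,1)` is quasiconcave: a nondecreasing bijection of `(0,1)` onto `(0,1)`
with `I(t)/t` nonincreasing, `I(0+) = 0` and `I(1-) = 1`. -/
def Quasiconcave (I : ℝ → ℝ) : Prop :=
  Set.BijOn I (Set.Ioo 0 1) (Set.Ioo 0 1) ∧
  MonotoneOn I (Set.Ioo 0 1) ∧
  AntitoneOn (fun t => I t / t) (Set.Ioo 0 1) ∧
  Tendsto I (nhdsWithin 0 (Set.Ioo 0 1)) (nhds 0) ∧
  Tendsto I (nhdsWithin 1 (Set.Ioo 0 1)) (nhds 1)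

/-- Condition (★): `∫_0^t I(s)/s ds ≲ I(t)`. -/
def StarCond (I : ℝ → ℝ) : Prop :=
  ∃ C : ℝ, 0 < C ∧ ∀ t ∈ Set.Ioo (0:ℝ) 1,
    ∫⁻ s in Set.Ioo (0:ℝ) t, ENNReal.ofReal (I s / s) ≤ ENNReal.ofReal (C * I t)

/-- The average property: `∫_0^t ds/I(s) ≲ t/I(t)`. -/
def AvgProp (I : ℝ → ℝ) : Prop :=
  ∃ C : ℝ, 0 < C ∧ ∀ t ∈ Set.Ioo (0:ℝ) 1,
    ∫⁻ s in Set.Ioo (0:ℝ) t, ENNReal.ofReal (1 / I s) ≤ ENNReal.ofReal (C * (t / I t))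

/-- The condition `∫_t^1 I(s)/s² ds ≲ (1/t) ∫_0^t I(s)/s ds`. -/
def MaxCond (I : ℝ → ℝ) : Prop :=
  ∃ C : ℝ, 0 < C ∧ ∀ t ∈ Set.Ioo (0:ℝ) 1,
    ∫⁻ s in Set.Ioo t 1, ENNReal.ofReal (I s / s ^ 2) ≤
      ENNReal.ofReal (C / t) * ∫⁻ s in Set.Ioo (0:ℝ) t, ENNReal.ofReal (I s / s)

/-- The class `𝒬` of quasiconcave functions. -/
def ClassQ (I : ℝ → ℝ) : Prop :=
  Quasiconcave I ∧ StarCond I ∧ AvgProp I ∧ MaxCond I ∧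
  ∃ c d : ℝ,
    IsLUB {l : ℝ | 0 ≤ l ∧ ∀ t ∈ Set.Ioo (0:ℝ) 1,
      ENNReal.ofReal (l * (I t / t ^ 2 - 1)) ≤
        ∫⁻ s in Set.Ioo t 1, ENNReal.ofReal (I s / s ^ 3)} c ∧
    IsLeast {e : ℝ | 0 < e ∧ ∀ t ∈ Set.Ioo (0:ℝ) 1,
      ∫⁻ s in Set.Ioo t 1, ENNReal.ofReal (I s / s ^ 2) ≤
        ENNReal.ofReal (e * (I t / t))} d ∧
    (1 - c) * d ≤ c

/-- The `Δ₂` condition: `I(2t) ≤ C I(t)` for `t ∈ (0,1/2)`. -/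
def Delta2 (I : ℝ → ℝ) : Prop :=
  ∃ C : ℝ, 0 < C ∧ ∀ t ∈ Set.Ioo (0:ℝ) (1/2), I (2 * t) ≤ C * I t

/-- A rearrangement-invariant Banach function norm on `M₊(0,1)`. -/
def IsRiNorm (ρ : (ℝ → ℝ≥0∞) → ℝ≥0∞) : Prop :=
  (∀ f : ℝ → ℝ≥0∞, Measurable f →
      (ρ f = 0 ↔ f =ᵐ[volume.restrict (Set.Ioo (0:ℝ) 1)] 0)) ∧
  (∀ f : ℝ → ℝ≥0∞, Measurable f → ∀ a : ℝ, 0 ≤ a →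
      ρ (fun t => ENNReal.ofReal a * f t) = ENNReal.ofReal a * ρ f) ∧
  (∀ f g : ℝ → ℝ≥0∞, Measurable f → Measurable g →
      ρ (fun t => f t + g t) ≤ ρ f + ρ g) ∧
  (∀ f g : ℝ → ℝ≥0∞, Measurable f → Measurable g →
      (∀ᵐ t ∂(volume.restrict (Set.Ioo (0:ℝ) 1)), f t ≤ g t) → ρ f ≤ ρ g) ∧
  (∀ (fn : ℕ → ℝ → ℝ≥0∞) (f : ℝ → ℝ≥0∞), (∀ n, Measurable (fn n)) → Measurable f →
      (∀ᵐ t ∂(volume.restrict (Set.Ioo (0:ℝ) 1)), Monotone (fun n => fn n t)) →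
      (∀ᵐ t ∂(volume.restrict (Set.Ioo (0:ℝ) 1)), (⨆ n, fn n t) = f t) →
      (⨆ n, ρ (fn n)) = ρ f) ∧
  (ρ (fun _ => 1) < ⊤) ∧
  (∃ c : ℝ, 0 < c ∧ ∀ f : ℝ → ℝ≥0∞, Measurable f →
      ∫⁻ t in Set.Ioo (0:ℝ) 1, f t ≤ ENNReal.ofReal c * ρ f) ∧
  (∀ f : ℝ → ℝ≥0∞, Measurable f → ρ f = ρ (rearr f))

/-- The associate norm `ρ'`. -/
def assoc (ρ : (ℝ → ℝ≥0∞) → ℝ≥0∞) (f : ℝ → ℝ≥0∞) : ℝ≥0∞ :=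
  ⨆ (g : ℝ → ℝ≥0∞) (_ : Measurable g ∧ ρ g ≤ 1),
    ∫⁻ t in Set.Ioo (0:ℝ) 1, f t * g t

/-- The optimal target norm `‖f‖_{Y_X}` of the r.i. norm `ρ = ‖·‖_X` under `H_I`. -/
def optTargetNorm (I : ℝ → ℝ) (ρ : (ℝ → ℝ≥0∞) → ℝ≥0∞) (f : ℝ → ℝ≥0∞) : ℝ≥0∞ :=
  ⨆ (g : ℝ → ℝ≥0∞) (_ : Measurable g ∧ assoc ρ (RI I (rearr g)) ≤ 1),
    ∫⁻ t in Set.Ioo (0:ℝ) 1, rearr f t * rearr g t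

/-- The optimal domain norm `‖f‖_{X_Y} = sup_{h ∼ f} ‖H_I h‖_Y`. -/
def optDomainNorm (I : ℝ → ℝ) (ρY : (ℝ → ℝ≥0∞) → ℝ≥0∞) (f : ℝ → ℝ≥0∞) : ℝ≥0∞ :=
  ⨆ (h : ℝ → ℝ≥0∞)
    (_ : Measurable h ∧ ∀ t ∈ Set.Ioo (0:ℝ) 1, rearr h t = rearr f t),
      ρY (HI I h)

/-- `H_I : X → Y` boundedly. -/
def HIBounded (I : ℝ → ℝ) (ρX ρY : (ℝ → ℝ≥0∞) → ℝ≥0∞) : Prop :=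
  ∃ C : ℝ, 0 < C ∧ ∀ f : ℝ → ℝ≥0∞, Measurable f →
    ρY (HI I f) ≤ ENNReal.ofReal C * ρX f

/-- `X` is the optimal domain space for `Y` under `H_I`. -/
def IsOptimalDomain (I : ℝ → ℝ) (ρX ρY : (ℝ → ℝ≥0∞) → ℝ≥0∞) : Prop :=
  HIBounded I ρX ρY ∧
  ∀ ρZ : (ℝ → ℝ≥0∞) → ℝ≥0∞, IsRiNorm ρZ → HIBounded I ρZ ρY →
    ∃ C : ℝ, 0 < C ∧ ∀ f : ℝ → ℝ≥0∞, Measurable f →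
      ρX f ≤ ENNReal.ofReal C * ρZ f

/-- `Y` is the optimal target space for `X` under `H_I`. -/
def IsOptimalTarget (I : ℝ → ℝ) (ρX ρY : (ℝ → ℝ≥0∞) → ℝ≥0∞) : Prop :=
  HIBounded I ρX ρY ∧
  ∀ ρZ : (ℝ → ℝ≥0∞) → ℝ≥0∞, IsRiNorm ρZ → HIBounded I ρX ρZ →
    ∃ C : ℝ, 0 < C ∧ ∀ f : ℝ → ℝ≥0∞, Measurable f →
      ρZ f ≤ ENNReal.ofReal C * ρY f

/-- The `K`-functional for the couple `(L¹, m_Ĩ)` over `(0,1)`. -/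
def KoneMTilde (I : ℝ → ℝ) (f : ℝ → ℝ≥0∞) (t : ℝ) : ℝ≥0∞ :=
  ⨅ (g : ℝ → ℝ≥0∞) (h : ℝ → ℝ≥0∞)
    (_ : Measurable g ∧ Measurable h ∧ ∀ s ∈ Set.Ioo (0:ℝ) 1, f s = g s + h s),
      (∫⁻ s in Set.Ioo (0:ℝ) 1, g s) +
        ENNReal.ofReal t * ⨆ s ∈ Set.Ioo (0:ℝ) 1, ENNReal.ofReal (s / I s) * rearr h s

lemma rearr_le {f : ℝ → ℝ≥0∞} {s : ℝ} {u : ℝ≥0∞}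
    (h : volume {x ∈ Set.Ioo (0:ℝ) 1 | u < f x} ≤ ENNReal.ofReal s) : rearr f s ≤ u :=
  @sInf_le ℝ≥0∞ _ {l : ℝ≥0∞ | volume {x ∈ Set.Ioo (0:ℝ) 1 | l < f x} ≤ ENNReal.ofReal s} u h

lemma le_rearr {f : ℝ → ℝ≥0∞} {s : ℝ} {u : ℝ≥0∞}
    (h : ∀ l : ℝ≥0∞, volume {x ∈ Set.Ioo (0:ℝ) 1 | l < f x} ≤ ENNReal.ofReal s → u ≤ l) :
    u ≤ rearr f s :=
  @le_sInf ℝ≥0∞ _ {l : ℝ≥0∞ | volume {x ∈ Set.Ioo (0:ℝ) 1 | l < f x} ≤ ENNReal.ofReal s} u h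

lemma rearr_antitone (f : ℝ → ℝ≥0∞) : Antitone (rearr f) := by
  intro a b hab
  exact sInf_le_sInf (fun l hl => hl.trans (ENNReal.ofReal_le_ofReal hab))

lemma rearr_measurable (f : ℝ → ℝ≥0∞) : Measurable (rearr f) :=
  (rearr_antitone f).measurable

lemma rearr_mono_fun {g f : ℝ → ℝ≥0∞} (h : ∀ x ∈ Set.Ioo (0:ℝ) 1, g x ≤ f x) (s : ℝ) :
    rearr g s ≤ rearr f s := by
  refine sInf_le_sInf (fun l hl => ?_)
  refine le_trans (measure_mono ?_) hl
  rintro x ⟨hx, hlx⟩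
  exact ⟨hx, hlx.trans_le (h x hx)⟩

lemma rearr_le_of_le {h : ℝ → ℝ≥0∞} {lam : ℝ≥0∞} (hle : ∀ x, h x ≤ lam) (s : ℝ) :
    rearr h s ≤ lam := by
  refine rearr_le ?_
  have he : {x ∈ Set.Ioo (0:ℝ) 1 | lam < h x} = ∅ := by
    ext x; simp only [mem_setOf_eq, mem_empty_iff_false, iff_false, not_and]
    exact fun _ => not_lt.2 (hle x)
  rw [he]
  simp

/-- Key characterization: `u < rearr f s ↔ ofReal s < D_f(u)`. -/
lemma lt_rearr_iff {f : ℝ → ℝ≥0∞} (s : ℝ) (u : ℝ≥0∞) :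
    u < rearr f s ↔ ENNReal.ofReal s < volume {x ∈ Set.Ioo (0:ℝ) 1 | u < f x} := by
  constructor
  · intro hu
    by_contra hcon
    push_neg at hcon
    exact absurd (rearr_le hcon) (not_le.2 hu)
  · intro hu
    rcases eq_or_ne u ⊤ with rfl | hut
    · have he : {x ∈ Set.Ioo (0:ℝ) 1 | (⊤:ℝ≥0∞) < f x} = ∅ := by
        ext x; simp [not_top_lt]
      rw [he] at hu; simp at hu
    · have hU : {x ∈ Set.Ioo (0:ℝ) 1 | u < f x} =
          ⋃ n : ℕ, {x ∈ Set.Ioo (0:ℝ) 1 | u + ((n:ℝ≥0∞) + 1)⁻¹ < f x} := by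
        ext x
        simp only [mem_setOf_eq, mem_iUnion]
        constructor
        · rintro ⟨hx, hlt⟩
          have hpos : 0 < f x - u := tsub_pos_of_lt hlt
          obtain ⟨n, hn⟩ := ENNReal.exists_inv_nat_lt hpos.ne'
          refine ⟨n, hx, ?_⟩
          have h1 : ((n:ℝ≥0∞) + 1)⁻¹ ≤ (n:ℝ≥0∞)⁻¹ :=
            ENNReal.inv_le_inv.2 (le_add_of_nonneg_right zero_le_one)
          have h2 : ((n:ℝ≥0∞) + 1)⁻¹ < f x - u := lt_of_le_of_lt h1 hn
          rwa [lt_tsub_iff_left] at h2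
        · rintro ⟨n, hx, hlt⟩
          exact ⟨hx, lt_of_le_of_lt (le_add_of_nonneg_right zero_le) hlt⟩
      have hdir : Directed (· ⊆ ·) (fun n : ℕ =>
          {x ∈ Set.Ioo (0:ℝ) 1 | u + ((n:ℝ≥0∞) + 1)⁻¹ < f x}) := by
        refine directed_of_isDirected_le ?_
        intro m n hmn x hx
        refine ⟨hx.1, lt_of_le_of_lt (add_le_add_right (ENNReal.inv_le_inv.2 (by
          exact_mod_cast add_le_add_left (Nat.cast_le.2 hmn) 1)) u) hx.2⟩
      rw [hU, Directed.measure_iUnion hdir] at hu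
      obtain ⟨n, hn⟩ := lt_iSup_iff.1 hu
      have hlt : u < u + ((n:ℝ≥0∞) + 1)⁻¹ :=
        ENNReal.lt_add_right hut (by simp)
      refine hlt.trans_le (le_rearr fun l hl => ?_)
      by_contra hcon
      push_neg at hcon
      have hmono : volume {x ∈ Set.Ioo (0:ℝ) 1 | u + ((n:ℝ≥0∞) + 1)⁻¹ < f x} ≤
          volume {x ∈ Set.Ioo (0:ℝ) 1 | l < f x} :=
        measure_mono (fun x hx => ⟨hx.1, hcon.le.trans_lt hx.2⟩)
      exact absurd (hmono.trans hl) (not_le.2 hn)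

/-- Layer cake for `ℝ≥0∞`-valued functions. -/
lemma layercake_ennreal (μ : Measure ℝ) [SigmaFinite μ] {g : ℝ → ℝ≥0∞} (hg : Measurable g) :
    ∫⁻ s, g s ∂μ = ∫⁻ u in Set.Ioi (0:ℝ), μ {s | ENNReal.ofReal u < g s} := by
  have hset : MeasurableSet {p : ℝ × ℝ | ENNReal.ofReal p.2 < g p.1} :=
    measurableSet_lt (ENNReal.measurable_ofReal.comp measurable_snd) (hg.comp measurable_fst)
  have step1 : ∀ s : ℝ, g s =
      ∫⁻ u in Set.Ioi (0:ℝ), {u : ℝ | ENNReal.ofReal u < g s}.indicator 1 u := by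
    intro s
    have hSm : MeasurableSet {u : ℝ | ENNReal.ofReal u < g s} :=
      measurableSet_lt ENNReal.measurable_ofReal measurable_const
    rw [lintegral_indicator_one hSm, Measure.restrict_apply hSm]
    rcases eq_or_ne (g s) ⊤ with htop | htop
    · have he : {u : ℝ | ENNReal.ofReal u < g s} ∩ Set.Ioi 0 = Set.Ioi 0 := by
        ext u; simp [htop]
      rw [he, htop, Real.volume_Ioi]
    · have he : {u : ℝ | ENNReal.ofReal u < g s} ∩ Set.Ioi 0 = Set.Ioo 0 (g s).toReal := by
        ext u
        simp only [mem_inter_iff, mem_setOf_eq, mem_Ioi, mem_Ioo]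
        constructor
        · rintro ⟨h1, h2⟩
          exact ⟨h2, (ENNReal.ofReal_lt_iff_lt_toReal h2.le htop).1 h1⟩
        · rintro ⟨h1, h2⟩
          exact ⟨(ENNReal.ofReal_lt_iff_lt_toReal h1.le htop).2 h2, h1⟩
      rw [he, Real.volume_Ioo, sub_zero, ENNReal.ofReal_toReal htop]
  have e1 : ∫⁻ s, g s ∂μ =
      ∫⁻ s, (∫⁻ u in Set.Ioi (0:ℝ), ({u : ℝ | ENNReal.ofReal u < g s}.indicator 1 u : ℝ≥0∞)) ∂μ :=
    lintegral_congr step1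
  have e2 : ∫⁻ s, (∫⁻ u in Set.Ioi (0:ℝ),
        ({u : ℝ | ENNReal.ofReal u < g s}.indicator 1 u : ℝ≥0∞)) ∂μ =
      ∫⁻ u in Set.Ioi (0:ℝ), ∫⁻ s,
        ({u : ℝ | ENNReal.ofReal u < g s}.indicator 1 u : ℝ≥0∞) ∂μ := by
    refine lintegral_lintegral_swap
      (f := fun s u => ({u : ℝ | ENNReal.ofReal u < g s}.indicator 1 u : ℝ≥0∞)) ?_
    have huc : (Function.uncurry fun (s : ℝ) (u : ℝ) =>
        ({u : ℝ | ENNReal.ofReal u < g s}.indicator 1 u : ℝ≥0∞)) =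
        {p : ℝ × ℝ | ENNReal.ofReal p.2 < g p.1}.indicator 1 := by
      ext p
      simp only [Function.uncurry, Set.indicator_apply, mem_setOf_eq, Pi.one_apply]
    rw [huc]
    exact (Measurable.indicator (measurable_one) hset : Measurable _).aemeasurable
  have e3 : ∀ u : ℝ, ∫⁻ s, ({u : ℝ | ENNReal.ofReal u < g s}.indicator 1 u : ℝ≥0∞) ∂μ =
      μ {s | ENNReal.ofReal u < g s} := by
    intro u
    have hfun : (fun s => ({u' : ℝ | ENNReal.ofReal u' < g s}.indicator 1 u : ℝ≥0∞)) =
        {s : ℝ | ENNReal.ofReal u < g s}.indicator 1 := by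
      ext s
      simp only [Set.indicator_apply, mem_setOf_eq, Pi.one_apply]
    rw [hfun, lintegral_indicator_one (measurableSet_lt measurable_const hg)]
  rw [e1, e2]
  exact lintegral_congr e3

lemma distrib_le {f : ℝ → ℝ≥0∞} (b : ℝ) :
    volume {x ∈ Set.Ioo (0:ℝ) 1 | rearr f b < f x} ≤ ENNReal.ofReal b := by
  by_contra hcon
  push_neg at hcon
  exact lt_irrefl _ ((lt_rearr_iff b (rearr f b)).2 hcon)

lemma bound1 {f : ℝ → ℝ≥0∞} (hf : Measurable f) {b : ℝ} (hb : b ∈ Set.Ioo (0:ℝ) 1)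
    (hlam : rearr f b ≠ ⊤) :
    ∫⁻ s in Set.Ioo (0:ℝ) 1, (f s - rearr f b) ≤ ∫⁻ s in Set.Ioo (0:ℝ) b, rearr f s := by
  set lam := rearr f b with hlamdef
  have hg : Measurable fun s => f s - lam := hf.sub measurable_const
  rw [layercake_ennreal _ hg, layercake_ennreal _ (rearr_measurable f)]
  refine lintegral_mono fun u => ?_
  rw [Measure.restrict_apply (measurableSet_lt measurable_const hg),
      Measure.restrict_apply (measurableSet_lt measurable_const (rearr_measurable f))]
  have hL : {s | ENNReal.ofReal u < f s - lam} ∩ Set.Ioo (0:ℝ) 1 =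
      {s ∈ Set.Ioo (0:ℝ) 1 | lam + ENNReal.ofReal u < f s} := by
    ext s
    simp only [mem_inter_iff, mem_setOf_eq, lt_tsub_iff_left]
    exact and_comm
  rw [hL]
  set d := volume {s ∈ Set.Ioo (0:ℝ) 1 | lam + ENNReal.ofReal u < f s} with hd
  have hdb : d ≤ ENNReal.ofReal b := by
    refine le_trans (measure_mono ?_) (distrib_le (f := f) b)
    rintro x ⟨hx1, hx2⟩
    exact ⟨hx1, lt_of_le_of_lt le_self_add hx2⟩
  have hdtop : d ≠ ⊤ := (hdb.trans_lt ENNReal.ofReal_lt_top).ne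
  have hsub : Set.Ioo (0:ℝ) d.toReal ⊆ {s | ENNReal.ofReal u < rearr f s} ∩ Set.Ioo 0 b := by
    intro s hs
    have hsb : s < b := lt_of_lt_of_le hs.2 (ENNReal.toReal_le_of_le_ofReal hb.1.le hdb)
    have hsd : ENNReal.ofReal s < d := (ENNReal.ofReal_lt_iff_lt_toReal hs.1.le hdtop).2 hs.2
    have hdu : d ≤ volume {x ∈ Set.Ioo (0:ℝ) 1 | ENNReal.ofReal u < f x} := by
      refine measure_mono ?_
      rintro x ⟨hx1, hx2⟩
      exact ⟨hx1, lt_of_le_of_lt (le_add_of_nonneg_left zero_le) hx2⟩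
    simp only [mem_inter_iff, mem_setOf_eq, mem_Ioo]
    exact ⟨(lt_rearr_iff s (ENNReal.ofReal u)).2 (hsd.trans_le hdu), hs.1, hsb⟩
  calc d = volume (Set.Ioo (0:ℝ) d.toReal) := by
        rw [Real.volume_Ioo, sub_zero, ENNReal.ofReal_toReal hdtop]
    _ ≤ _ := measure_mono hsub


/-- Proposition 4.5 / `prop:KFunctional2`.  For quasiconcave `I`,
`K(f, t, L¹, m_Ĩ) ≲ ∫_0^{I⁻¹(t)} f^* + t · sup_{I⁻¹(t)≤s<1} (s/I(s)) f^*(s)`. -/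
theorem statement13 (I : ℝ → ℝ) (hqc : Quasiconcave I)
    (J : ℝ → ℝ) (hJ : Set.InvOn J I (Set.Ioo 0 1) (Set.Ioo 0 1))
    (hJmaps : Set.MapsTo J (Set.Ioo 0 1) (Set.Ioo 0 1)) :
    ∃ C : ℝ, 0 < C ∧ ∀ f : ℝ → ℝ≥0∞, Measurable f → ∀ t ∈ Set.Ioo (0:ℝ) 1,
      KoneMTilde I f t ≤
        ENNReal.ofReal C *
          ((∫⁻ s in Set.Ioo (0:ℝ) (J t), rearr f s) +
            ENNReal.ofReal t *
              ⨆ s ∈ Set.Ico (J t) 1, ENNReal.ofReal (s / I s) * rearr f s) := by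
  refine ⟨2, by norm_num, ?_⟩
  intro f hf t ht
  have hJt : J t ∈ Set.Ioo (0:ℝ) 1 := hJmaps ht
  set lam := rearr f (J t) with hlam
  set A := ∫⁻ s in Set.Ioo (0:ℝ) (J t), rearr f s with hA
  have hconstA : ENNReal.ofReal (J t) * lam ≤ A := by
    calc ENNReal.ofReal (J t) * lam = lam * volume (Set.Ioo (0:ℝ) (J t)) := by
          rw [Real.volume_Ioo, sub_zero, mul_comm]
      _ = ∫⁻ _ in Set.Ioo (0:ℝ) (J t), lam := (setLIntegral_const _ _).symm
      _ ≤ A := setLIntegral_mono (rearr_measurable f) fun s hs => rearr_antitone f hs.2.le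
  rcases eq_or_ne lam ⊤ with htop | htop
  · have hAtop : A = ⊤ := by
      have h1 := hconstA
      rw [htop, ENNReal.mul_top
        (by simp [ENNReal.ofReal_eq_zero, not_le, hJt.1] : ENNReal.ofReal (J t) ≠ 0)] at h1
      exact top_le_iff.1 h1
    rw [hAtop, top_add, ENNReal.mul_top
      (by simp [ENNReal.ofReal_eq_zero] : ENNReal.ofReal (2:ℝ) ≠ 0)]
    exact le_top
  · set g : ℝ → ℝ≥0∞ := fun s => f s - lam with hgdef
    set h : ℝ → ℝ≥0∞ := fun s => min (f s) lam with hhdef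
    have hgm : Measurable g := hf.sub measurable_const
    have hhm : Measurable h := hf.min measurable_const
    have hdecomp : ∀ s ∈ Set.Ioo (0:ℝ) 1, f s = g s + h s := fun s _ => (tsub_add_min).symm
    have hK : KoneMTilde I f t ≤
        (∫⁻ s in Set.Ioo (0:ℝ) 1, g s) +
          ENNReal.ofReal t * ⨆ s ∈ Set.Ioo (0:ℝ) 1, ENNReal.ofReal (s / I s) * rearr h s :=
      iInf_le_of_le g (iInf_le_of_le h (iInf_le_of_le ⟨hgm, hhm, hdecomp⟩ le_rfl))
    set SR := ⨆ s ∈ Set.Ico (J t) 1, ENNReal.ofReal (s / I s) * rearr f s with hSR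
    have hsup : (⨆ s ∈ Set.Ioo (0:ℝ) 1, ENNReal.ofReal (s / I s) * rearr h s) ≤
        SR + ENNReal.ofReal (J t / t) * lam := by
      refine iSup₂_le fun s hs => ?_
      rcases le_or_gt (J t) s with hle | hlt
      · refine le_trans ?_ le_self_add
        refine le_trans ?_
          (le_iSup₂ (f := fun (s : ℝ) (_ : s ∈ Set.Ico (J t) 1) =>
            ENNReal.ofReal (s / I s) * rearr f s) s ⟨hle, hs.2⟩)
        exact mul_le_mul' le_rfl (rearr_mono_fun (fun x _ => min_le_left _ _) s)
      · refine le_trans ?_ le_add_self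
        refine mul_le_mul' (ENNReal.ofReal_le_ofReal ?_)
          (rearr_le_of_le (fun x => min_le_right _ _) s)
        have hIs : I s ∈ Set.Ioo (0:ℝ) 1 := hqc.1.mapsTo hs
        have hIJt : I (J t) = t := hJ.2 ht
        have hanti : I (J t) / (J t) ≤ I s / s := hqc.2.2.1 hs hJt hlt.le
        rw [hIJt] at hanti
        rw [div_le_div_iff₀ hJt.1 hs.1] at hanti
        rw [div_le_div_iff₀ hIs.1 ht.1]
        nlinarith [hs.1, hJt.1, ht.1, hIs.1]
    have hb1 : ∫⁻ s in Set.Ioo (0:ℝ) 1, g s ≤ A := bound1 hf hJt htop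
    have hscale : ENNReal.ofReal t * ENNReal.ofReal (J t / t) = ENNReal.ofReal (J t) := by
      rw [← ENNReal.ofReal_mul ht.1.le, mul_comm, div_mul_cancel₀ _ (ne_of_gt ht.1)]
    calc KoneMTilde I f t
        ≤ (∫⁻ s in Set.Ioo (0:ℝ) 1, g s) +
          ENNReal.ofReal t * ⨆ s ∈ Set.Ioo (0:ℝ) 1, ENNReal.ofReal (s / I s) * rearr h s := hK
      _ ≤ A + ENNReal.ofReal t * (SR + ENNReal.ofReal (J t / t) * lam) :=
          add_le_add hb1 (mul_le_mul' le_rfl hsup)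
      _ = A + (ENNReal.ofReal t * SR + ENNReal.ofReal (J t) * lam) := by
          rw [mul_add, ← mul_assoc, hscale]
      _ ≤ A + (ENNReal.ofReal t * SR + A) :=
          add_le_add_right (add_le_add_right hconstA _) _
      _ = (A + ENNReal.ofReal t * SR) + A := by ring
      _ ≤ (A + ENNReal.ofReal t * SR) + (A + ENNReal.ofReal t * SR) :=
          add_le_add_right le_self_add _
      _ = ENNReal.ofReal 2 * (A + ENNReal.ofReal t * SR) := by
          rw [← two_mul]
          norm_num
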